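/- arXiv:2504.01971 — 5 statements merged into one kernel-verified Lean document; each statement's English description precedes it below -/
import Mathlib

section
/- For every complex number z and real φ, exp(i z cos φ) = Σ_{m=-∞}^{∞} i^m J_m(z) e^{i m φ}, where J_m is the Bessel function of the first kind of integer order m (Jacobi–Anger expansion). -/
open Complex Real

/-- Bessel function of the first kind of natural order `n`. -/
noncomputable def besselJ (n : ℕ) (z : ℂ) : ℂ :=
  ∑' k : ℕ, ((-1 : ℂ) ^ k / ((k.factorial : ℂ) * ((k + n).factorial : ℂ))) * (z / 2) ^ (2 * k + n)

/-- Bessel function of the first kind of integer order `m`, with `J_{-n} = (-1)^n J_n`. -/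
noncomputable def besselJInt (m : ℤ) (z : ℂ) : ℂ :=
  if 0 ≤ m then besselJ m.toNat z else (-1 : ℂ) ^ m.natAbs * besselJ m.natAbs z

/-- The reindexing bijection `ℤ × ℕ ≃ ℕ × ℕ`, `(m, l) ↦ (l + m⁺, l + m⁻)`. -/
def jaEquiv : ℤ × ℕ ≃ ℕ × ℕ where
  toFun p := (p.2 + p.1.toNat, p.2 + (-p.1).toNat)
  invFun q := ((q.1 : ℤ) - q.2, min q.1 q.2)
  left_inv p := by
    obtain ⟨m, l⟩ := p
    simp only [Prod.mk.injEq]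
    constructor <;> omega
  right_inv q := by
    obtain ⟨j, k⟩ := q
    simp only [Prod.mk.injEq]
    constructor <;> omega

lemma summable_norm_pow_div_fac (a : ℂ) : Summable fun n : ℕ => ‖a ^ n / n.factorial‖ := by
  have := Real.summable_pow_div_factorial ‖a‖
  refine this.congr fun n => ?_
  rw [norm_div, norm_pow]
  norm_num

lemma exp_mul_exp_eq (a b : ℂ) :
    Complex.exp a * Complex.exp b =
      ∑' p : ℕ × ℕ, (a ^ p.1 / p.1.factorial) * (b ^ p.2 / p.2.factorial) := by
  have ha := summable_norm_pow_div_fac a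
  have hb := summable_norm_pow_div_fac b
  rw [Complex.exp_eq_exp_ℂ, NormedSpace.exp_eq_tsum_div]
  exact tsum_mul_tsum_of_summable_norm ha hb

set_option maxHeartbeats 1000000 in
/-- Jacobi–Anger expansion: `exp(i z cos φ) = Σ_{m∈ℤ} i^m J_m(z) e^{imφ}`. -/
theorem jacobi_anger (z : ℂ) (φ : ℝ) :
    Complex.exp (Complex.I * z * Real.cos φ) =
      ∑' m : ℤ, Complex.I ^ m * besselJInt m z * Complex.exp (Complex.I * m * φ) := by
  set u : ℂ := Complex.exp (Complex.I * φ) with hu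
  have hu0 : u ≠ 0 := Complex.exp_ne_zero _
  set t : ℂ := Complex.I * u with ht
  have ht0 : t ≠ 0 := mul_ne_zero Complex.I_ne_zero hu0
  set a : ℂ := z / 2 * t with ha
  set b : ℂ := -(z / 2) * t⁻¹ with hb
  have hsum : Summable (fun p : ℕ × ℕ => (a ^ p.1 / p.1.factorial) * (b ^ p.2 / p.2.factorial)) :=
    summable_mul_of_summable_norm (f := fun n : ℕ => a ^ n / n.factorial)
      (g := fun n : ℕ => b ^ n / n.factorial)
      (summable_norm_pow_div_fac a) (summable_norm_pow_div_fac b)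
  have hsum2 : Summable (fun c : ℤ × ℕ =>
      (a ^ (jaEquiv c).1 / ((jaEquiv c).1.factorial : ℂ)) *
        (b ^ (jaEquiv c).2 / ((jaEquiv c).2.factorial : ℂ))) :=
    (jaEquiv.summable_iff
      (f := fun p : ℕ × ℕ => (a ^ p.1 / p.1.factorial) * (b ^ p.2 / p.2.factorial))).2 hsum
  -- LHS = exp a * exp b
  have hlhs : Complex.I * z * Real.cos φ = a + b := by
    rw [Complex.ofReal_cos, Complex.cos, ha, hb, ht]
    have huinv : Complex.exp (-↑φ * Complex.I) = u⁻¹ := by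
      rw [hu, ← Complex.exp_neg]; ring_nf
    have hu' : Complex.exp (↑φ * Complex.I) = u := by rw [hu]; ring_nf
    rw [huinv, hu']
    have hI : (Complex.I * u)⁻¹ = -Complex.I * u⁻¹ := by
      rw [mul_inv, Complex.inv_I]
    rw [hI]
    field_simp
  -- t-power identity for the right-hand side
  have htm : ∀ m : ℤ, Complex.I ^ m * Complex.exp (Complex.I * m * φ) = t ^ m := by
    intro m
    rw [ht, mul_zpow]
    congr 1
    rw [← Complex.exp_int_mul]
    ring_nf
  calc Complex.exp (Complex.I * z * ↑(Real.cos φ))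
      = Complex.exp a * Complex.exp b := by rw [hlhs, Complex.exp_add]
    _ = ∑' p : ℕ × ℕ, (a ^ p.1 / p.1.factorial) * (b ^ p.2 / p.2.factorial) :=
        exp_mul_exp_eq a b
    _ = ∑' c : ℤ × ℕ, (a ^ (jaEquiv c).1 / ((jaEquiv c).1.factorial : ℂ)) *
          (b ^ (jaEquiv c).2 / ((jaEquiv c).2.factorial : ℂ)) :=
        (jaEquiv.tsum_eq _).symm
    _ = ∑' m : ℤ, ∑' l : ℕ, (a ^ (jaEquiv (m, l)).1 / ((jaEquiv (m, l)).1.factorial : ℂ)) *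
          (b ^ (jaEquiv (m, l)).2 / ((jaEquiv (m, l)).2.factorial : ℂ)) := Summable.tsum_prod hsum2
    _ = ∑' m : ℤ, Complex.I ^ m * besselJInt m z * Complex.exp (Complex.I * m * φ) := by
        refine tsum_congr fun m => ?_
        rw [show Complex.I ^ m * besselJInt m z * Complex.exp (Complex.I * m * φ)
            = besselJInt m z * (Complex.I ^ m * Complex.exp (Complex.I * m * φ)) by ring,
          htm m]
        by_cases hm : 0 ≤ m
        · -- nonneg case
          obtain ⟨n, hn⟩ : ∃ n : ℕ, n = m.toNat := ⟨_, rfl⟩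
          have hjq : ∀ l : ℕ, jaEquiv (m, l) = (l + n, l) := by
            intro l
            simp only [jaEquiv, Equiv.coe_fn_mk, Prod.mk.injEq]
            constructor <;> omega
          have hterm : ∀ l : ℕ,
              (a ^ (l + n) / ((l + n).factorial : ℂ)) * (b ^ l / (l.factorial : ℂ)) =
                (((-1 : ℂ) ^ l / ((l.factorial : ℂ) * ((l + n).factorial : ℂ))) *
                  (z / 2) ^ (2 * l + n)) * t ^ n := by
            intro l
            have h1 : ((l.factorial : ℂ)) ≠ 0 := Nat.cast_ne_zero.2 l.factorial_ne_zero
            have h2 : (((l + n).factorial : ℂ)) ≠ 0 := Nat.cast_ne_zero.2 (l + n).factorial_ne_zero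
            rw [ha, hb]
            field_simp
            have hX : t⁻¹ ^ l * t ^ l = 1 := by rw [inv_pow, inv_mul_cancel₀ (pow_ne_zero _ ht0)]
            have hc : ((-1 / 2 : ℂ)) ^ l = (-1) ^ l * (1 / 2) ^ l := by rw [← mul_pow]; norm_num
            linear_combination (z ^ (l * 2) * z ^ n * t ^ n * (-1 / 2) ^ l * (1 / 2) ^ l * (1 / 2) ^ n) * hX +
              (z ^ (l * 2) * z ^ n * t ^ n * (1 / 2) ^ l * (1 / 2) ^ n) * hc
          have : ∑' l : ℕ, (a ^ (jaEquiv (m, l)).1 / ((jaEquiv (m, l)).1.factorial : ℂ)) *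
              (b ^ (jaEquiv (m, l)).2 / ((jaEquiv (m, l)).2.factorial : ℂ)) =
              ∑' l : ℕ, (((-1 : ℂ) ^ l / ((l.factorial : ℂ) * ((l + n).factorial : ℂ))) *
                (z / 2) ^ (2 * l + n)) * t ^ n := by
            refine tsum_congr fun l => ?_
            rw [hjq l]
            exact hterm l
          rw [this, tsum_mul_right, besselJInt, if_pos hm, ← hn]
          congr 1
          rw [← Int.toNat_of_nonneg hm, zpow_natCast, ← hn]
        · -- negative case
          obtain ⟨n, hn⟩ : ∃ n : ℕ, n = m.natAbs := ⟨_, rfl⟩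
          have hjq : ∀ l : ℕ, jaEquiv (m, l) = (l, l + n) := by
            intro l
            simp only [jaEquiv, Equiv.coe_fn_mk, Prod.mk.injEq]
            constructor <;> omega
          have hterm : ∀ l : ℕ,
              (a ^ l / (l.factorial : ℂ)) * (b ^ (l + n) / ((l + n).factorial : ℂ)) =
                (((-1 : ℂ) ^ l / ((l.factorial : ℂ) * ((l + n).factorial : ℂ))) *
                  (z / 2) ^ (2 * l + n)) * ((-1 : ℂ) ^ n * (t ^ n)⁻¹) := by
            intro l
            have h1 : ((l.factorial : ℂ)) ≠ 0 := Nat.cast_ne_zero.2 l.factorial_ne_zero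
            have h2 : (((l + n).factorial : ℂ)) ≠ 0 := Nat.cast_ne_zero.2 (l + n).factorial_ne_zero
            rw [ha, hb]
            field_simp
            have hX : t⁻¹ ^ l * t ^ l = 1 := by rw [inv_pow, inv_mul_cancel₀ (pow_ne_zero _ ht0)]
            have hY : t⁻¹ ^ n * t ^ n = 1 := by rw [inv_pow, inv_mul_cancel₀ (pow_ne_zero _ ht0)]
            have hc : ((-1 / 2 : ℂ)) ^ l = (-1) ^ l * (1 / 2) ^ l := by rw [← mul_pow]; norm_num
            have hd : ((-1 / 2 : ℂ)) ^ n = (-1) ^ n * (1 / 2) ^ n := by rw [← mul_pow]; norm_num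
            linear_combination (z ^ (l * 2) * z ^ n * (-1 / 2) ^ l * (-1 / 2) ^ n * (1 / 2) ^ l) *
              (t⁻¹ ^ n * t ^ n) * hX + (z ^ (l * 2) * z ^ n * (-1 / 2) ^ l * (-1 / 2) ^ n * (1 / 2) ^ l) * hY +
              (z ^ (l * 2) * z ^ n * (1 / 2) ^ l * (-1 / 2) ^ n) * hc +
              (z ^ (l * 2) * z ^ n * (1 / 2) ^ l * (-1) ^ l * (1 / 2) ^ l) * hd
          have : ∑' l : ℕ, (a ^ (jaEquiv (m, l)).1 / ((jaEquiv (m, l)).1.factorial : ℂ)) *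
              (b ^ (jaEquiv (m, l)).2 / ((jaEquiv (m, l)).2.factorial : ℂ)) =
              ∑' l : ℕ, (((-1 : ℂ) ^ l / ((l.factorial : ℂ) * ((l + n).factorial : ℂ))) *
                (z / 2) ^ (2 * l + n)) * ((-1 : ℂ) ^ n * (t ^ n)⁻¹) := by
            refine tsum_congr fun l => ?_
            rw [hjq l]
            exact hterm l
          rw [this, tsum_mul_right, besselJInt, if_neg hm, ← hn]
          have hm' : m = -(n : ℤ) := by omega
          rw [hm', zpow_neg, zpow_natCast, besselJ]
          ring
end

section
/- For every integer m, real numbers r ≥ 0, k > 0 and α, one has ∫_0^{2π} e^{i k r cos α cos φ - i m φ} cos(k |sin α| r sin φ) dφ = 2π i^{|m|} J_{|m|}(k r) cos(m α). -/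
open Complex Real

section Aux
open intervalIntegral MeasureTheory Finset

lemma exp_I_int_two_pi (c : ℤ) : Complex.exp (Complex.I * c * (2*π)) = 1 := by
  rw [← Complex.exp_int_mul_two_pi_mul_I c]; ring_nf

lemma integral_exp_int (c : ℤ) :
    ∫ φ in (0:ℝ)..(2*π), Complex.exp (Complex.I * c * φ) =
      if c = 0 then (2*π : ℂ) else 0 := by
  rcases eq_or_ne c 0 with h | h
  · simp [h]
  · rw [if_neg h]
    have hc : (Complex.I * (c:ℂ)) ≠ 0 :=
      mul_ne_zero Complex.I_ne_zero (Int.cast_ne_zero.2 h)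
    have := integral_exp_mul_complex (a := 0) (b := 2*π) hc
    simp only [mul_assoc] at this ⊢
    rw [this]
    rw [show (Complex.I * ((c:ℂ) * (2*π:ℝ))) = Complex.I * c * (2*π) by push_cast; ring]
    rw [exp_I_int_two_pi]
    simp

lemma cos_pow_expand (n : ℕ) (φ : ℝ) :
    (Complex.cos φ)^n =
      ∑ j ∈ range (n+1), (n.choose j : ℂ) / 2^n *
        Complex.exp (Complex.I * ((2*(j:ℤ) - n : ℤ) : ℂ) * φ) := by
  have h : Complex.cos φ = (Complex.exp (Complex.I*φ) + Complex.exp (-(Complex.I*φ)))/2 := by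
    rw [Complex.cos]; ring_nf
  rw [h, div_pow, add_pow, Finset.sum_div]
  refine Finset.sum_congr rfl fun j hj => ?_
  have hjn : j ≤ n := Nat.lt_succ_iff.1 (Finset.mem_range.1 hj)
  rw [← Complex.exp_nat_mul, ← Complex.exp_nat_mul, ← Complex.exp_add]
  rw [show ((j:ℂ) * (Complex.I*φ) + ((n - j : ℕ):ℂ) * -(Complex.I*φ))
      = Complex.I * ((2*(j:ℤ) - n : ℤ) : ℂ) * φ by
    push_cast [hjn]; ring]
  ring

lemma integral_cos_pow_exp (n : ℕ) (m : ℤ) :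
    ∫ φ in (0:ℝ)..(2*π), (Complex.cos φ)^n * Complex.exp (-(Complex.I*m*φ)) =
      ∑ j ∈ range (n+1), (n.choose j : ℂ) / 2^n *
        (if 2*(j:ℤ) = n + m then (2*π:ℂ) else 0) := by
  have h1 : ∀ φ : ℝ, (Complex.cos φ)^n * Complex.exp (-(Complex.I*m*φ)) =
      ∑ j ∈ range (n+1), (n.choose j : ℂ) / 2^n *
        Complex.exp (Complex.I * ((2*(j:ℤ) - n - m : ℤ) : ℂ) * φ) := by
    intro φ
    rw [cos_pow_expand, Finset.sum_mul]
    refine Finset.sum_congr rfl fun j hj => ?_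
    rw [mul_assoc, ← Complex.exp_add]
    congr 2
    push_cast; ring
  rw [intervalIntegral.integral_congr (g := fun φ : ℝ => ∑ j ∈ range (n+1),
      (n.choose j : ℂ) / 2^n * Complex.exp (Complex.I * ((2*(j:ℤ) - n - m : ℤ) : ℂ) * φ))
      (fun φ _ => h1 φ)]
  rw [intervalIntegral.integral_finset_sum]
  · refine Finset.sum_congr rfl fun j hj => ?_
    rw [intervalIntegral.integral_const_mul, integral_exp_int]
    congr 1
    by_cases h : 2*(j:ℤ) = n + m
    · rw [if_pos (by omega), if_pos h]
    · rw [if_neg (by omega), if_neg h]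
  · intro j hj
    apply Continuous.intervalIntegrable
    fun_prop

lemma tsum_g_eval (m : ℤ) (z : ℂ) :
    ∑' n : ℕ, (Complex.I*z)^n / (n.factorial : ℂ) *
      (∑ j ∈ range (n+1), (n.choose j : ℂ)/2^n *
        (if 2*(j:ℤ) = n + m then (2*π:ℂ) else 0)) =
      2*π*Complex.I^m.natAbs * besselJ m.natAbs z := by
  set a := m.natAbs with ha
  set g : ℕ → ℂ := fun n => (Complex.I*z)^n / (n.factorial : ℂ) *
      (∑ j ∈ range (n+1), (n.choose j : ℂ)/2^n *
        (if 2*(j:ℤ) = n + m then (2*π:ℂ) else 0)) with hg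
  have he : Function.Injective (fun k : ℕ => 2*k + a) := fun x y h => by
    simp only at h; omega
  have hsupp : Function.support g ⊆ Set.range (fun k : ℕ => 2*k + a) := by
    intro n hn
    rw [Function.mem_support] at hn
    by_contra hr
    simp only [Set.mem_range] at hr
    apply hn
    rw [hg]
    simp only
    rw [Finset.sum_eq_zero, mul_zero]
    intro j hj
    rw [mem_range] at hj
    rw [if_neg, mul_zero]
    intro hjeq
    exact hr ⟨(n - a)/2, by omega⟩
  have hcomp : ∀ k : ℕ, g (2*k + a) =
      2*π*Complex.I^a * (((-1 : ℂ) ^ k / ((k.factorial : ℂ) * ((k + a).factorial : ℂ))) * (z / 2) ^ (2 * k + a)) := by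
    intro k
    set n := 2*k + a with hn
    set j0 := k + m.toNat with hj0
    have hj0n : (2*(j0:ℤ)) = (n:ℤ) + m := by omega
    have hj0mem : j0 ∈ range (n+1) := by rw [mem_range]; omega
    have hsum : (∑ j ∈ range (n+1), (n.choose j : ℂ)/2^n *
        (if 2*(j:ℤ) = n + m then (2*π:ℂ) else 0)) = (n.choose j0 : ℂ)/2^n * (2*π) := by
      rw [Finset.sum_eq_single_of_mem j0 hj0mem]
      · rw [if_pos hj0n]
      · intro b _ hb
        rw [if_neg (by omega), mul_zero]
    have hC : (n.choose j0) * (k.factorial * (k+a).factorial) = n.factorial := by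
      have hcase : (j0 = k + a ∧ n - j0 = k) ∨ (j0 = k ∧ n - j0 = k + a) := by omega
      rcases hcase with ⟨h1, h2⟩ | ⟨h1, h2⟩
      · have := Nat.choose_mul_factorial_mul_factorial (show j0 ≤ n by omega)
        rw [h2] at this; rw [h1] at this ⊢
        rw [← this]; ring
      · have := Nat.choose_mul_factorial_mul_factorial (show j0 ≤ n by omega)
        rw [h2] at this; rw [h1] at this ⊢
        rw [← this]; ring
    have hIpow : (Complex.I)^n = (-1:ℂ)^k * Complex.I^a := by
      rw [hn, pow_add, pow_mul, Complex.I_sq]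
    rw [hg]
    simp only
    rw [hsum, mul_pow, hIpow, div_pow]
    have hfac : ((n.factorial : ℂ)) ≠ 0 := Nat.cast_ne_zero.2 n.factorial_ne_zero
    have hfk : ((k.factorial : ℂ)) ≠ 0 := Nat.cast_ne_zero.2 k.factorial_ne_zero
    have hfka : (((k+a).factorial : ℂ)) ≠ 0 := Nat.cast_ne_zero.2 (k+a).factorial_ne_zero
    have h2n : ((2:ℂ))^n ≠ 0 := pow_ne_zero _ two_ne_zero
    have hCc : ((n.choose j0 : ℂ)) * ((k.factorial : ℂ) * ((k+a).factorial : ℂ)) = (n.factorial : ℂ) := by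
      exact_mod_cast congrArg (Nat.cast : ℕ → ℂ) hC
    field_simp
    linear_combination (z^(k*2) * z^a) * hCc
  rw [← Function.Injective.tsum_eq he hsupp]
  rw [show (fun k : ℕ => g (2*k+a)) = fun k => 2*π*Complex.I^a *
      (((-1 : ℂ) ^ k / ((k.factorial : ℂ) * ((k + a).factorial : ℂ))) * (z / 2) ^ (2 * k + a)) from funext hcomp]
  rw [tsum_mul_left]
  rfl

lemma key_integral (m : ℤ) (z : ℂ) :
    ∫ φ in (0:ℝ)..(2*π), Complex.exp (Complex.I * z * Real.cos φ - Complex.I * m * φ) =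
      2*π*Complex.I^m.natAbs * besselJ m.natAbs z := by
  have h2π : (0:ℝ) ≤ 2*π := by positivity
  set F : ℕ → ℝ → ℂ := fun n φ =>
    (Complex.I * z * (Real.cos φ : ℂ))^n / (n.factorial : ℂ) *
      Complex.exp (-(Complex.I*m*φ)) with hF
  have hpt : ∀ φ : ℝ, Complex.exp (Complex.I * z * Real.cos φ - Complex.I * m * φ) =
      ∑' n, F n φ := by
    intro φ
    rw [sub_eq_add_neg, Complex.exp_add]
    have hA : Complex.exp (Complex.I * z * Real.cos φ) =
        ∑' n : ℕ, (Complex.I * z * (Real.cos φ:ℂ))^n / (n.factorial : ℂ) := by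
      rw [Complex.exp_eq_exp_ℂ, NormedSpace.exp_eq_tsum_div]
    rw [hA, ← tsum_mul_right]
  have hFint : ∀ n, IntegrableOn (F n) (Set.Ioc 0 (2*π)) := by
    intro n
    apply Continuous.integrableOn_Ioc
    fun_prop
  have hbound : ∀ n φ, ‖F n φ‖ ≤ ‖z‖^n / n.factorial := by
    intro n φ
    have h1 : ‖Complex.exp (-(Complex.I*(m:ℂ)*(φ:ℂ)))‖ = 1 := by
      rw [Complex.norm_exp]
      simp
    rw [norm_mul, h1, mul_one, norm_div, norm_pow]
    have h2 : ‖Complex.I * z * (Real.cos φ : ℂ)‖ ≤ ‖z‖ := by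
      rw [norm_mul, norm_mul, Complex.norm_I, one_mul, Complex.norm_real, Real.norm_eq_abs]
      nlinarith [Real.abs_cos_le_one φ, norm_nonneg z, abs_nonneg (Real.cos φ)]
    have h3 : ‖(n.factorial : ℂ)‖ = (n.factorial : ℝ) := by
      simp
    rw [h3]
    gcongr
  have hnorm_int : ∀ n, (∫ φ in Set.Ioc 0 (2*π), ‖F n φ‖) ≤ (2*π) * (‖z‖^n / n.factorial) := by
    intro n
    calc (∫ φ in Set.Ioc 0 (2*π), ‖F n φ‖)
        ≤ ∫ _ in Set.Ioc 0 (2*π), (‖z‖^n / n.factorial : ℝ) := by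
          apply setIntegral_mono_on (hFint n).norm (integrableOn_const (by
            simp [Real.volume_Ioc, ENNReal.mul_eq_top]))
            measurableSet_Ioc
          intro φ _
          exact hbound n φ
      _ = (2*π) * (‖z‖^n / n.factorial) := by
          rw [setIntegral_const, Real.volume_real_Ioc, smul_eq_mul]
          rw [max_eq_left (by linarith)]
          ring_nf
  have hsummable : Summable (fun n => ∫ φ in Set.Ioc 0 (2*π), ‖F n φ‖) := by
    apply Summable.of_nonneg_of_le (fun n => integral_nonneg (fun _ => norm_nonneg _)) hnorm_int
    exact (Real.summable_pow_div_factorial ‖z‖).mul_left (2*π)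
  have hhs := MeasureTheory.hasSum_integral_of_summable_integral_norm hFint hsummable
  have hFn : ∀ n, (∫ φ in Set.Ioc 0 (2*π), F n φ) =
      (Complex.I*z)^n / (n.factorial : ℂ) *
        (∑ j ∈ range (n+1), (n.choose j : ℂ)/2^n *
          (if 2*(j:ℤ) = n + m then (2*π:ℂ) else 0)) := by
    intro n
    rw [← intervalIntegral.integral_of_le h2π]
    have heq : ∀ φ : ℝ, F n φ = (Complex.I*z)^n / (n.factorial : ℂ) *
        ((Complex.cos φ)^n * Complex.exp (-(Complex.I*m*φ))) := by
      intro φ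
      rw [hF]
      simp only
      rw [Complex.ofReal_cos, mul_pow]
      ring
    rw [intervalIntegral.integral_congr (fun φ _ => heq φ),
      intervalIntegral.integral_const_mul, integral_cos_pow_exp]
  calc ∫ φ in (0:ℝ)..(2*π), Complex.exp (Complex.I * z * Real.cos φ - Complex.I * m * φ)
      = ∫ φ in Set.Ioc 0 (2*π), ∑' n, F n φ := by
        rw [intervalIntegral.integral_of_le h2π]
        exact setIntegral_congr_fun measurableSet_Ioc (fun φ _ => hpt φ)
    _ = ∑' n, ∫ φ in Set.Ioc 0 (2*π), F n φ := hhs.tsum_eq.symm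
    _ = 2*π*Complex.I^m.natAbs * besselJ m.natAbs z := by
        rw [funext hFn] ; exact tsum_g_eval m z

set_option maxHeartbeats 1000000 in
lemma shift_lemma (m : ℤ) (z : ℂ) (t : ℝ) :
    ∫ φ in (0:ℝ)..(2*π), Complex.exp (Complex.I*z*Real.cos (φ + t) - Complex.I*m*φ) =
      Complex.exp (Complex.I*m*t) *
        ∫ φ in (0:ℝ)..(2*π), Complex.exp (Complex.I*z*Real.cos φ - Complex.I*m*φ) := by
  set f : ℝ → ℂ := fun u => Complex.exp (Complex.I*z*Real.cos u - Complex.I*m*u) with hf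
  have hper : Function.Periodic f (2*π) := by
    intro u
    simp only [hf]
    rw [show Complex.I*z*(Real.cos (u + 2*π) : ℂ) - Complex.I*m*((u + 2*π : ℝ) : ℂ)
        = (Complex.I*z*Real.cos (u + 2*π) - Complex.I*m*u) + Complex.I*((-m : ℤ) : ℂ)*(2*π) by
      push_cast; ring]
    rw [Complex.exp_add, exp_I_int_two_pi, mul_one, Real.cos_add_two_pi]
  have h1 : ∀ φ:ℝ, Complex.exp (Complex.I*z*Real.cos (φ + t) - Complex.I*m*φ) =
      Complex.exp (Complex.I*m*t) * f (φ + t) := by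
    intro φ
    simp only [hf]
    rw [← Complex.exp_add]
    congr 1
    push_cast; ring
  rw [intervalIntegral.integral_congr (fun φ _ => h1 φ), intervalIntegral.integral_const_mul]
  congr 1
  rw [intervalIntegral.integral_comp_add_right f t]
  have hpp := hper.intervalIntegral_add_eq t 0
  rw [zero_add] at hpp
  rw [show (0:ℝ)+t = t by ring, show 2*π+t = t+2*π by ring]
  exact hpp

lemma hcosb (x : ℝ) : (Real.cos x : ℂ) =
    (Complex.exp (Complex.I*x) + Complex.exp (-(Complex.I*x)))/2 := by
  rw [Complex.ofReal_cos, Complex.cos]; ring_nf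

end Aux

open intervalIntegral MeasureTheory Finset in
set_option maxHeartbeats 1000000 in
/-- `∫_0^{2π} e^{ikr cosα cosφ - imφ} cos(k|sinα| r sinφ) dφ = 2π i^{|m|} J_{|m|}(kr) cos(mα)`. -/
theorem integral_cos_part (m : ℤ) (r k α : ℝ) (hr : 0 ≤ r) (hk : 0 < k) :
    (∫ φ in (0 : ℝ)..(2 * π),
        Complex.exp (Complex.I * k * r * Real.cos α * Real.cos φ - Complex.I * m * φ) *
          (Real.cos (k * |Real.sin α| * r * Real.sin φ) : ℂ)) =
      2 * (π : ℂ) * Complex.I ^ m.natAbs * besselJ m.natAbs ((k : ℂ) * r) *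
        (Real.cos (m * α) : ℂ) := by
  set s : ℝ := if 0 ≤ Real.sin α then α else -α with hs
  have hcs : Real.cos s = Real.cos α := by
    rw [hs]; split <;> simp [Real.cos_neg]
  have hss : Real.sin s = |Real.sin α| := by
    rw [hs]; split
    · rw [_root_.abs_of_nonneg (by assumption)]
    · rw [Real.sin_neg, _root_.abs_of_neg (by linarith [not_le.1 (by assumption)])]
  set z : ℂ := (k:ℂ)*r with hz
  have hpt : ∀ φ : ℝ,
      Complex.exp (Complex.I * k * r * Real.cos α * Real.cos φ - Complex.I * m * φ) *
          (Real.cos (k * |Real.sin α| * r * Real.sin φ) : ℂ) =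
      (Complex.exp (Complex.I*z*Real.cos (φ + (-s)) - Complex.I*m*φ) +
        Complex.exp (Complex.I*z*Real.cos (φ + s) - Complex.I*m*φ))/2 := by
    intro φ
    have e1 : k*r*Real.cos α*Real.cos φ + k * |Real.sin α| * r*Real.sin φ
        = k*r*Real.cos (φ + (-s)) := by
      rw [show φ + -s = φ - s by ring, Real.cos_sub, ← hcs, ← hss]; ring
    have e2 : k*r*Real.cos α*Real.cos φ - k * |Real.sin α| * r*Real.sin φ
        = k*r*Real.cos (φ + s) := by
      rw [Real.cos_add, ← hcs, ← hss]; ring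
    have e1c := congrArg (Complex.ofReal) e1
    have e2c := congrArg (Complex.ofReal) e2
    push_cast at e1c e2c
    rw [hcosb (k * |Real.sin α| * r * Real.sin φ)]
    rw [show Complex.exp (Complex.I * k * r * Real.cos α * Real.cos φ - Complex.I * m * φ) *
          ((Complex.exp (Complex.I*((k * |Real.sin α| * r * Real.sin φ : ℝ):ℂ)) +
            Complex.exp (-(Complex.I*((k * |Real.sin α| * r * Real.sin φ : ℝ):ℂ))))/2)
        = (Complex.exp (Complex.I * k * r * Real.cos α * Real.cos φ - Complex.I * m * φ) *
            Complex.exp (Complex.I*((k * |Real.sin α| * r * Real.sin φ : ℝ):ℂ)) +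
          Complex.exp (Complex.I * k * r * Real.cos α * Real.cos φ - Complex.I * m * φ) *
            Complex.exp (-(Complex.I*((k * |Real.sin α| * r * Real.sin φ : ℝ):ℂ))))/2 by ring]
    rw [← Complex.exp_add, ← Complex.exp_add]
    congr 2
    · rw [hz]; congr 1; push_cast
      linear_combination Complex.I * e1c
    · rw [hz]; congr 1; push_cast
      linear_combination Complex.I * e2c
  rw [intervalIntegral.integral_congr (fun φ _ => hpt φ)]
  have hi1 : IntervalIntegrable
      (fun φ : ℝ => Complex.exp (Complex.I*z*Real.cos (φ + (-s)) - Complex.I*m*φ))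
      volume 0 (2*π) := (Continuous.intervalIntegrable (by fun_prop) _ _)
  have hi2 : IntervalIntegrable
      (fun φ : ℝ => Complex.exp (Complex.I*z*Real.cos (φ + s) - Complex.I*m*φ))
      volume 0 (2*π) := (Continuous.intervalIntegrable (by fun_prop) _ _)
  rw [intervalIntegral.integral_div, intervalIntegral.integral_add hi1 hi2]
  rw [shift_lemma m z (-s), shift_lemma m z s, key_integral m z]
  have hc : (Complex.exp (Complex.I*m*((-s : ℝ):ℂ)) + Complex.exp (Complex.I*m*(s:ℂ)))
      = 2 * (Real.cos (m * α) : ℂ) := by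
    have : Real.cos ((m:ℝ) * s) = Real.cos ((m:ℝ) * α) := by
      rw [hs]; split
      · rfl
      · rw [show (m:ℝ) * -α = -((m:ℝ)*α) by ring, Real.cos_neg]
    rw [show Complex.I*(m:ℂ)*((-s : ℝ):ℂ) = -(Complex.I*(((m:ℝ)*s : ℝ):ℂ)) by push_cast; ring]
    rw [show Complex.I*(m:ℂ)*((s : ℝ):ℂ) = Complex.I*(((m:ℝ)*s : ℝ):ℂ) by push_cast; ring]
    have h2 := hcosb ((m:ℝ)*s)
    rw [this] at h2
    linear_combination (-2 : ℂ) * h2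
  rw [show Complex.exp (Complex.I*(m:ℂ)*((-s:ℝ):ℂ)) * (2*π*Complex.I^m.natAbs * besselJ m.natAbs z) +
        Complex.exp (Complex.I*(m:ℂ)*((s:ℝ):ℂ)) * (2*π*Complex.I^m.natAbs * besselJ m.natAbs z)
      = (Complex.exp (Complex.I*(m:ℂ)*((-s:ℝ):ℂ)) + Complex.exp (Complex.I*(m:ℂ)*((s:ℝ):ℂ))) *
        (2*π*Complex.I^m.natAbs * besselJ m.natAbs z) by ring, hc]
  ring
end

section
/- For every integer m, real numbers r ≥ 0, k > 0 and α, one has ∫_0^{2π} e^{i k r cos α cos φ - i m φ} sin(k |sin α| r sin φ) dφ = - sign(sin α) · 2π i^{|m|} J_{|m|}(k r) sin(m α). -/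
open Complex Real

open intervalIntegral MeasureTheory


lemma int_exp (n : ℤ) : (∫ φ in (0:ℝ)..(2*π), Complex.exp (Complex.I * n * φ)) =
    if n = 0 then 2*π else 0 := by
  rcases eq_or_ne n 0 with h | h
  · simp [h]
  · rw [if_neg h]
    have hc : (Complex.I * n) ≠ 0 := by
      simp [Complex.ext_iff, h]
    have : ∀ x : ℝ, Complex.exp (Complex.I * n * x) = Complex.exp ((Complex.I * n) * x) := by
      intro x; ring_nf
    rw [integral_exp_mul_complex hc]
    have h2 : Complex.I * n * ((2*π:ℝ):ℂ) = n * (2*(π:ℂ) * Complex.I) := by push_cast; ring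
    rw [h2, Complex.exp_int_mul_two_pi_mul_I]
    simp

lemma cos_pow_exp (n : ℕ) (m : ℤ) :
    (∫ φ in (0:ℝ)..(2*π), (Real.cos φ:ℂ)^n * Complex.exp (-(Complex.I) * m * φ))
    = ∑ j ∈ Finset.range (n+1), ((n.choose j : ℂ)/2^n) *
        (if 2*(j:ℤ) - n = m then (2*π:ℂ) else 0) := by
  have key : ∀ φ:ℝ, (Real.cos φ:ℂ)^n * Complex.exp (-(Complex.I) * m * φ)
      = ∑ j ∈ Finset.range (n+1), ((n.choose j : ℂ)/2^n) *
          Complex.exp (Complex.I * ((2*(j:ℤ) - n - m : ℤ)) * φ) := by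
    intro φ
    have hcos : (Real.cos φ:ℂ) = (Complex.exp (Complex.I*φ) + Complex.exp (-(Complex.I)*φ))/2 := by
      rw [Complex.ofReal_cos, Complex.cos]
      ring_nf
    rw [hcos, div_pow, add_pow, Finset.sum_div, Finset.sum_mul]
    refine Finset.sum_congr rfl fun j hj => ?_
    have hj' : j ≤ n := Nat.lt_succ_iff.mp (Finset.mem_range.mp hj)
    rw [← Complex.exp_nat_mul, ← Complex.exp_nat_mul, ← Complex.exp_add]
    have hE : Complex.exp ((j:ℂ)*(Complex.I*φ) + ((n-j:ℕ):ℂ)*(-(Complex.I)*φ)) *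
        Complex.exp (-(Complex.I)*m*φ)
        = Complex.exp (Complex.I * ((2*(j:ℤ) - n - m : ℤ):ℂ) * φ) := by
      rw [← Complex.exp_add]; congr 1
      rw [Nat.cast_sub hj']; push_cast; ring
    calc Complex.exp ((j:ℂ)*(Complex.I*φ) + ((n-j:ℕ):ℂ)*(-(Complex.I)*φ)) * (n.choose j:ℂ) / 2^n *
          Complex.exp (-(Complex.I)*m*φ)
        = (n.choose j:ℂ)/2^n * (Complex.exp ((j:ℂ)*(Complex.I*φ) + ((n-j:ℕ):ℂ)*(-(Complex.I)*φ)) *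
            Complex.exp (-(Complex.I)*m*φ)) := by ring
      _ = _ := by rw [hE]
  simp only [key]
  rw [intervalIntegral.integral_finset_sum]
  · refine Finset.sum_congr rfl fun j _ => ?_
    rw [intervalIntegral.integral_const_mul, int_exp]
    congr 1
    simp only [sub_eq_zero]
    split <;> simp
  · intro j _
    apply Continuous.intervalIntegrable
    fun_prop

lemma bessel_integral (m : ℕ) (z : ℂ) :
    (∫ φ in (0:ℝ)..(2*π), Complex.exp (Complex.I * z * Real.cos φ) *
        Complex.exp (-(Complex.I) * (m:ℤ) * φ))
    = 2 * π * Complex.I^m * besselJ m z := by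
  have hle : (0:ℝ) ≤ 2*π := by positivity
  set F : ℕ → ℝ → ℂ := fun n φ =>
    (Complex.I * z)^n / n.factorial *
      ((Real.cos φ:ℂ)^n * Complex.exp (-(Complex.I) * (m:ℤ) * φ)) with hF
  have hpt : ∀ φ : ℝ, Complex.exp (Complex.I * z * Real.cos φ) *
      Complex.exp (-(Complex.I)*(m:ℤ)*φ) = ∑' n, F n φ := by
    intro φ
    have hexp : Complex.exp (Complex.I * z * Real.cos φ)
        = ∑' n:ℕ, (Complex.I * z * (Real.cos φ:ℂ))^n / n.factorial := by
      rw [Complex.exp_eq_exp_ℂ, NormedSpace.exp_eq_tsum_div]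
    rw [hexp, ← tsum_mul_right]
    congr 1; ext n
    simp only [hF]; rw [mul_pow]; ring
  have hnorm : ∀ n (φ : ℝ), ‖F n φ‖ ≤ ‖z‖^n / n.factorial := by
    intro n φ
    have h1 : ‖Complex.exp (-(Complex.I)*(m:ℤ)*φ)‖ = 1 := by
      rw [Complex.norm_exp]
      simp
    simp only [hF, norm_mul, norm_div, norm_pow]
    rw [h1, mul_one]
    have h3 : ‖Complex.I * z‖ = ‖z‖ := by
      rw [norm_mul, Complex.norm_I, one_mul]
    have h4 : ‖((n.factorial : ℕ) : ℂ)‖ = (n.factorial : ℝ) := by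
      simp
    have h5 : ‖((Real.cos φ : ℝ) : ℂ)‖ ^ n ≤ 1 := by
      rw [Complex.norm_real, Real.norm_eq_abs]
      exact pow_le_one₀ (abs_nonneg _) (Real.abs_cos_le_one φ)
    rw [Complex.norm_I, one_mul, h4]
    calc ‖z‖^n / n.factorial * ‖((Real.cos φ : ℝ) : ℂ)‖ ^ n
        ≤ ‖z‖^n / n.factorial * 1 :=
          mul_le_mul_of_nonneg_left h5 (by positivity)
      _ = ‖z‖^n / n.factorial := by ring
  have hcont : ∀ n, Continuous (F n) := by
    intro n; apply Continuous.mul continuous_const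
    fun_prop
  have hint : ∀ n, IntegrableOn (F n) (Set.Ioc 0 (2*π)) := fun n =>
    (hcont n).integrableOn_Ioc
  have hsummable : Summable fun n => ∫ φ in Set.Ioc (0:ℝ) (2*π), ‖F n φ‖ := by
    apply Summable.of_nonneg_of_le (fun n => integral_nonneg (fun _ => norm_nonneg _))
      (fun n => ?_) ((Real.summable_pow_div_factorial ‖z‖).mul_left (2*π))
    calc (∫ φ in Set.Ioc (0:ℝ) (2*π), ‖F n φ‖)
        ≤ ∫ _ in Set.Ioc (0:ℝ) (2*π), (‖z‖^n / n.factorial) := by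
          apply setIntegral_mono_on ((hint n).norm) (integrableOn_const measure_Ioc_lt_top.ne)
            measurableSet_Ioc (fun φ _ => hnorm n φ)
      _ = 2*π * (‖z‖^n / n.factorial) := by
          rw [setIntegral_const, Real.volume_real_Ioc_of_le hle, sub_zero,
            smul_eq_mul]
  have swap : (∫ φ in (0:ℝ)..(2*π), Complex.exp (Complex.I * z * Real.cos φ) *
      Complex.exp (-(Complex.I)*(m:ℤ)*φ)) = ∑' n, ∫ φ in (0:ℝ)..(2*π), F n φ := by
    rw [intervalIntegral.integral_of_le hle]
    simp_rw [hpt]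
    rw [← MeasureTheory.integral_tsum_of_summable_integral_norm hint hsummable]
    congr 1; ext n
    rw [intervalIntegral.integral_of_le hle]
  rw [swap]
  have hFint : ∀ n, (∫ φ in (0:ℝ)..(2*π), F n φ)
      = (Complex.I*z)^n / n.factorial * ∑ j ∈ Finset.range (n+1), ((n.choose j : ℂ)/2^n) *
        (if 2*(j:ℤ) - n = (m:ℤ) then (2*π:ℂ) else 0) := by
    intro n
    simp only [hF]
    rw [intervalIntegral.integral_const_mul, cos_pow_exp]
  simp_rw [hFint]
  set a : ℕ → ℂ := fun n => (Complex.I*z)^n / n.factorial * ∑ j ∈ Finset.range (n+1),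
      ((n.choose j : ℂ)/2^n) * (if 2*(j:ℤ) - n = (m:ℤ) then (2*π:ℂ) else 0) with ha
  have hg : Function.Injective (fun k : ℕ => m + 2*k) := fun a b h => by
    simpa using h
  have hsupp : Function.support a ⊆ Set.range (fun k : ℕ => m + 2*k) := by
    intro n hn
    by_contra hr
    apply hn
    simp only [ha]
    rw [Finset.sum_eq_zero, mul_zero]
    intro j hj
    rw [if_neg, mul_zero]
    intro heq
    apply hr
    have hj' : j ≤ n := Nat.lt_succ_iff.mp (Finset.mem_range.mp hj)
    exact ⟨j - m, by simp only []; omega⟩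
  rw [← hg.tsum_eq hsupp]
  have hval : ∀ k : ℕ, a (m + 2*k) = (2*(π:ℂ)*Complex.I^m) *
      (((-1:ℂ)^k / ((k.factorial:ℂ) * ((k+m).factorial:ℂ))) * (z/2)^(2*k+m)) := by
    intro k
    simp only [ha]
    rw [Finset.sum_eq_single_of_mem (m+k) (Finset.mem_range.mpr (by omega))
      (fun j hj hne => by rw [if_neg (by push_cast; omega), mul_zero])]
    rw [if_pos (by push_cast; ring)]
    have hfac : ((m+2*k).choose (m+k) : ℂ) * ((m+k).factorial : ℂ) * (k.factorial : ℂ)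
        = ((m+2*k).factorial : ℂ) := by
      have h1 := Nat.choose_mul_factorial_mul_factorial (show m+k ≤ m+2*k by omega)
      have h2 : m + 2*k - (m+k) = k := by omega
      rw [h2] at h1
      exact_mod_cast congrArg (Nat.cast (R := ℂ)) h1
    have hIpow : (Complex.I*z)^(m+2*k) = Complex.I^m * (-1:ℂ)^k * z^(m+2*k) := by
      rw [mul_pow, pow_add, pow_mul, Complex.I_sq]
    rw [hIpow, div_pow]
    have e1 : 2*k+m = m+2*k := by omega
    rw [e1]
    have n1 : ((m+2*k).factorial : ℂ) ≠ 0 := Nat.cast_ne_zero.2 (Nat.factorial_ne_zero _)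
    have n2 : (k.factorial : ℂ) ≠ 0 := Nat.cast_ne_zero.2 (Nat.factorial_ne_zero _)
    have n3 : ((k+m).factorial : ℂ) ≠ 0 := Nat.cast_ne_zero.2 (Nat.factorial_ne_zero _)
    have n4 : ((2:ℂ))^(m+2*k) ≠ 0 := pow_ne_zero _ two_ne_zero
    have hkm : ((k+m).factorial : ℂ) = ((m+k).factorial : ℂ) := by rw [Nat.add_comm]
    rw [hkm]
    have hC : ((m+2*k).choose (m+k) : ℂ)
        = ((m+2*k).factorial : ℂ) / (((m+k).factorial :ℂ) * (k.factorial:ℂ)) := by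
      rw [eq_div_iff (by exact mul_ne_zero (Nat.cast_ne_zero.2 (Nat.factorial_ne_zero _)) n2)]
      linear_combination hfac
    rw [hC]
    field_simp
  rw [tsum_congr hval, tsum_mul_left, besselJ]

lemma bessel_integral_int (m : ℤ) (z : ℂ) :
    (∫ φ in (0:ℝ)..(2*π), Complex.exp (Complex.I * z * Real.cos φ) *
        Complex.exp (-(Complex.I) * m * φ))
    = 2 * π * Complex.I^m.natAbs * besselJ m.natAbs z := by
  rcases Int.natAbs_eq m with h | h
  · conv_lhs => rw [h]
    have := bessel_integral m.natAbs z
    simpa using this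
  · set n := m.natAbs with hn
    have key : (∫ φ in (0:ℝ)..(2*π), Complex.exp (Complex.I * z * Real.cos φ) *
        Complex.exp (-(Complex.I) * m * φ))
        = ∫ φ in (0:ℝ)..(2*π), Complex.exp (Complex.I * z * Real.cos φ) *
          Complex.exp (-(Complex.I) * ((n:ℤ):ℂ) * φ) := by
      have hpt : ∀ φ : ℝ, Complex.exp (Complex.I * z * Real.cos φ) *
          Complex.exp (-(Complex.I) * m * φ)
          = (fun ψ : ℝ => Complex.exp (Complex.I * z * Real.cos ψ) *
              Complex.exp (-(Complex.I) * ((n:ℤ):ℂ) * ψ)) (2*π - φ) := by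
        intro φ
        simp only
        have hc : Real.cos (2*π - φ) = Real.cos φ := by
          rw [Real.cos_sub]
          simp [Real.cos_two_pi, Real.sin_two_pi]
        rw [hc]
        congr 1
        have : (-(Complex.I) * ((n:ℤ):ℂ) * (((2*π - φ):ℝ):ℂ))
            = -(Complex.I) * (m:ℂ) * (φ:ℂ) + ((-(n:ℤ) : ℤ):ℂ) * (2*(π:ℂ)*Complex.I) := by
          push_cast [h]
          ring
        rw [this, Complex.exp_add, Complex.exp_int_mul_two_pi_mul_I, mul_one]
      simp_rw [hpt]
      have hsub := intervalIntegral.integral_comp_sub_left (a := (0:ℝ)) (b := 2*π)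
        (fun ψ : ℝ => Complex.exp (Complex.I * z * Real.cos ψ) *
          Complex.exp (-(Complex.I) * ((n:ℤ):ℂ) * ψ)) (2*π)
      rw [hsub]
      norm_num
    rw [key]
    have := bessel_integral n z
    simpa using this

lemma bessel_shift (m : ℤ) (z : ℂ) (β : ℝ) :
    (∫ φ in (0:ℝ)..(2*π), Complex.exp (Complex.I * z * Real.cos (φ - β)) *
        Complex.exp (-(Complex.I) * m * φ))
    = Complex.exp (-(Complex.I) * m * β) *
        (2 * π * Complex.I^m.natAbs * besselJ m.natAbs z) := by
  set g : ℝ → ℂ := fun ψ => Complex.exp (Complex.I * z * Real.cos ψ) *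
      Complex.exp (-(Complex.I) * m * ψ) with hg
  have hpt : ∀ φ:ℝ, Complex.exp (Complex.I * z * Real.cos (φ - β)) *
      Complex.exp (-(Complex.I) * m * φ)
      = Complex.exp (-(Complex.I)*m*β) * g (φ - β) := by
    intro φ
    simp only [hg, ← Complex.exp_add]
    congr 1
    push_cast
    ring
  simp_rw [hpt]
  rw [intervalIntegral.integral_const_mul]
  congr 1
  rw [intervalIntegral.integral_comp_sub_right _ β]
  have hper : Function.Periodic g (2*π) := by
    intro x
    simp only [hg]
    rw [Real.cos_add_two_pi]
    congr 1
    have : -(Complex.I) * (m:ℂ) * (((x + 2*π):ℝ):ℂ)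
        = -(Complex.I) * (m:ℂ) * (x:ℂ) + ((-m : ℤ):ℂ) * (2*(π:ℂ)*Complex.I) := by
      push_cast; ring
    rw [this, Complex.exp_add, Complex.exp_int_mul_two_pi_mul_I, mul_one]
  have hshift := hper.intervalIntegral_add_eq (0 - β) 0
  have hb1 : 0 - β + 2*π = 2*π - β := by ring
  rw [hb1, zero_add] at hshift
  rw [hshift]
  exact bessel_integral_int m z

lemma main_aux (m : ℤ) (z β : ℝ) :
    (∫ φ in (0:ℝ)..(2*π),
        Complex.exp (Complex.I * z * Real.cos β * Real.cos φ - Complex.I * m * φ) *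
          (Real.sin (z * Real.sin β * Real.sin φ) : ℂ))
    = -(2 * (π:ℂ)) * Complex.I ^ m.natAbs * besselJ m.natAbs (z:ℂ) *
        (Real.sin (m * β) : ℂ) := by
  have hpt : ∀ φ : ℝ,
      Complex.exp (Complex.I * z * Real.cos β * Real.cos φ - Complex.I * m * φ) *
        (Real.sin (z * Real.sin β * Real.sin φ) : ℂ)
      = (Complex.I/2) * (Complex.exp (Complex.I * (z:ℂ) * Real.cos (φ - -β)) *
            Complex.exp (-(Complex.I) * m * φ))
        - (Complex.I/2) * (Complex.exp (Complex.I * (z:ℂ) * Real.cos (φ - β)) *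
            Complex.exp (-(Complex.I) * m * φ)) := by
    intro φ
    rw [Real.cos_sub, Real.cos_sub, Real.cos_neg, Real.sin_neg,
      Complex.ofReal_sin, Complex.sin]
    push_cast
    ring_nf
    simp only [Complex.exp_sub, Complex.exp_add, Complex.exp_neg]
    ring
  simp_rw [hpt]
  rw [intervalIntegral.integral_sub ((Continuous.intervalIntegrable (by fun_prop) _ _))
    ((Continuous.intervalIntegrable (by fun_prop) _ _)),
    intervalIntegral.integral_const_mul, intervalIntegral.integral_const_mul,
    bessel_shift m (z:ℂ) (-β), bessel_shift m (z:ℂ) β]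
  have e1 : Complex.exp (-(Complex.I)*m*((-β:ℝ):ℂ)) =
      Complex.exp (((m*β:ℝ):ℂ)*Complex.I) := by
    congr 1; push_cast; ring
  have e2 : Complex.exp (-(Complex.I)*m*(β:ℂ)) =
      Complex.exp (-((m*β:ℝ):ℂ)*Complex.I) := by
    congr 1; push_cast; ring
  have e3 : ((Real.sin (m*β) : ℝ) : ℂ) = (Complex.exp (-((m*β:ℝ):ℂ)*Complex.I) -
      Complex.exp (((m*β:ℝ):ℂ)*Complex.I)) * Complex.I / 2 := by
    rw [Complex.ofReal_sin, Complex.sin]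
  rw [e1, e2, e3]
  ring


/-- `∫_0^{2π} e^{ikr cosα cosφ - imφ} sin(k|sinα| r sinφ) dφ
      = - sign(sinα) 2π i^{|m|} J_{|m|}(kr) sin(mα)`. -/
theorem integral_sin_part (m : ℤ) (r k α : ℝ) (hr : 0 ≤ r) (hk : 0 < k) :
    (∫ φ in (0 : ℝ)..(2 * π),
        Complex.exp (Complex.I * k * r * Real.cos α * Real.cos φ - Complex.I * m * φ) *
          (Real.sin (k * |Real.sin α| * r * Real.sin φ) : ℂ)) =
      -(Real.sign (Real.sin α) : ℂ) * (2 * (π : ℂ)) * Complex.I ^ m.natAbs *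
        besselJ m.natAbs ((k : ℂ) * r) * (Real.sin (m * α) : ℂ) := by
  rcases lt_trichotomy (Real.sin α) 0 with hneg | hzero | hpos
  · have habs : |Real.sin α| = -Real.sin α := abs_of_neg hneg
    have hsign : Real.sign (Real.sin α) = -1 := Real.sign_of_neg hneg
    have hpt : ∀ φ:ℝ,
        Complex.exp (Complex.I * k * r * Real.cos α * Real.cos φ - Complex.I * m * φ) *
          (Real.sin (k * |Real.sin α| * r * Real.sin φ) : ℂ)
        = Complex.exp (Complex.I * ((k*r:ℝ):ℂ) * Real.cos (-α) * Real.cos φ -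
              Complex.I * m * φ) *
          (Real.sin ((k*r) * Real.sin (-α) * Real.sin φ) : ℂ) := by
      intro φ
      rw [Real.cos_neg, Real.sin_neg, habs]
      have h1 : Complex.I * (k:ℂ) * r * Real.cos α * Real.cos φ - Complex.I * m * φ
          = Complex.I * ((k*r:ℝ):ℂ) * Real.cos α * Real.cos φ - Complex.I * m * φ := by
        push_cast; ring
      have h2 : k * -Real.sin α * r * Real.sin φ = k*r * -Real.sin α * Real.sin φ := by ring
      rw [h1, h2]
    simp_rw [hpt]
    rw [main_aux m (k*r) (-α), hsign]
    have h3 : (m:ℝ) * -α = -((m:ℝ)*α) := by ring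
    rw [h3, Real.sin_neg]
    push_cast
    ring
  · have habs : |Real.sin α| = 0 := by rw [hzero, abs_zero]
    have hsign : Real.sign (Real.sin α) = 0 := by rw [hzero, Real.sign_zero]
    simp [habs, hsign]
  · have habs : |Real.sin α| = Real.sin α := abs_of_pos hpos
    have hsign : Real.sign (Real.sin α) = 1 := Real.sign_of_pos hpos
    have hpt : ∀ φ:ℝ,
        Complex.exp (Complex.I * k * r * Real.cos α * Real.cos φ - Complex.I * m * φ) *
          (Real.sin (k * |Real.sin α| * r * Real.sin φ) : ℂ)
        = Complex.exp (Complex.I * ((k*r:ℝ):ℂ) * Real.cos α * Real.cos φ -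
              Complex.I * m * φ) *
          (Real.sin ((k*r) * Real.sin α * Real.sin φ) : ℂ) := by
      intro φ
      rw [habs]
      have h1 : Complex.I * (k:ℂ) * r * Real.cos α * Real.cos φ - Complex.I * m * φ
          = Complex.I * ((k*r:ℝ):ℂ) * Real.cos α * Real.cos φ - Complex.I * m * φ := by
        push_cast; ring
      have h2 : k * Real.sin α * r * Real.sin φ = k*r * Real.sin α * Real.sin φ := by ring
      rw [h1, h2]
    simp_rw [hpt]
    rw [main_aux m (k*r) α, hsign]
    push_cast
    ring
end

section
/- For any complex numbers a, a', c, c' (with c' and c+a avoiding nonpositive integers so all terms are defined) and natural number n, the terminating hypergeometric identity ₃F₂(a, a', -n; c', 1-n-c; 1) = (Γ(c+a+n) Γ(c) / (Γ(c+a) Γ(c+n))) · ₃F₂(a, c'-a', -n; c', c+a; 1) holds, where ₃F₂ with upper parameter -n denotes the finite sum Σ_{k=0}^{n} ((a)_k (b)_k (-n)_k) / ((c₁)_k (c₂)_k k!). -/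
open Complex Finset

/-- Pochhammer symbol `(x)_k = x(x+1)⋯(x+k-1)`. -/
noncomputable def poch (x : ℂ) (k : ℕ) : ℂ := ∏ i ∈ Finset.range k, (x + i)

/-- Terminating `₃F₂(a, b, -n; c, d; 1)` as a finite sum. -/
noncomputable def threeF2 (a b : ℂ) (n : ℕ) (c d : ℂ) : ℂ :=
  ∑ k ∈ Finset.range (n + 1),
    poch a k * poch b k * poch (-(n : ℂ)) k / (poch c k * poch d k * (k.factorial : ℂ))

lemma poch_zero (x : ℂ) : poch x 0 = 1 := by simp [poch]

lemma poch_succ (x : ℂ) (k : ℕ) : poch x (k + 1) = poch x k * (x + k) := by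
  simp [poch, Finset.prod_range_succ]

lemma poch_add (x : ℂ) (m k : ℕ) : poch x (m + k) = poch x m * poch (x + m) k := by
  induction k with
  | zero => simp [poch_zero]
  | succ k ih =>
    rw [← Nat.add_assoc, poch_succ, ih, poch_succ]
    push_cast
    ring

lemma poch_factor_ne_zero {x : ℂ} {k : ℕ} (h : poch x k ≠ 0) :
    ∀ i < k, x + i ≠ 0 := by
  intro i hi hz
  exact h (Finset.prod_eq_zero (Finset.mem_range.2 hi) hz)

lemma poch_reflect (x : ℂ) (j : ℕ) : poch x j = (-1) ^ j * poch (1 - x - j) j := by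
  have : poch (1 - x - j) j = ∏ i ∈ Finset.range j, (1 - x - j + (j - 1 - i : ℕ)) := by
    rw [poch]
    exact (Finset.prod_range_reflect (fun i => 1 - x - (j:ℂ) + i) j).symm
  rw [this, poch, show ((-1:ℂ)) ^ j = ∏ _i ∈ Finset.range j, (-1:ℂ) by simp, ← Finset.prod_mul_distrib]
  apply Finset.prod_congr rfl
  intro i hi
  have hi' : i < j := Finset.mem_range.1 hi
  have : ((j - 1 - i : ℕ) : ℂ) = (j : ℂ) - 1 - i := by
    have h1 : j - 1 - i = j - (1 + i) := by omega
    have h2 : 1 + i ≤ j := by omega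
    rw [h1, Nat.cast_sub h2]
    push_cast
    ring
  rw [this]
  ring

lemma vandermonde (k : ℕ) : ∀ b c : ℂ,
    ∑ j ∈ Finset.range (k + 1),
      (-1) ^ j * (k.choose j : ℂ) * poch b j * poch (c + j) (k - j) = poch (c - b) k := by
  induction k with
  | zero => intro b c; simp [poch_zero]
  | succ k ih =>
    intro b c
    rw [Finset.sum_range_succ' _ (k + 1)]
    have hsplit : ∀ i ∈ Finset.range (k + 1),
        (-1) ^ (i+1) * ((k+1).choose (i+1) : ℂ) * poch b (i+1) * poch (c + (i+1 : ℕ)) (k + 1 - (i+1))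
        = (-b) * ((-1) ^ i * (k.choose i : ℂ) * poch (b+1) i * poch ((c+1) + i) (k - i))
          + (-1) ^ (i+1) * (k.choose (i+1) : ℂ) * poch b (i+1) * poch (c + (i+1 : ℕ)) (k + 1 - (i+1)) := by
      intro i hi
      have hch : ((k+1).choose (i+1) : ℂ) = (k.choose i : ℂ) + (k.choose (i+1) : ℂ) := by
        rw [Nat.choose_succ_succ]; push_cast; ring
      have hb : poch b (i+1) = b * poch (b+1) i := by
        rw [Nat.add_comm i 1, poch_add]
        norm_num [poch_succ, poch_zero]
      have hc2 : poch (c + (i+1 : ℕ)) (k + 1 - (i+1)) = poch ((c+1) + i) (k - i) := by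
        have h1 : k + 1 - (i+1) = k - i := by omega
        rw [h1]
        congr 1
        push_cast
        ring
      rw [hch, hb, hc2]
      ring
    rw [Finset.sum_congr rfl hsplit, Finset.sum_add_distrib, ← Finset.mul_sum, ih (b+1) (c+1)]
    have h2 : (∑ i ∈ Finset.range (k + 1),
        (-1) ^ (i+1) * (k.choose (i+1) : ℂ) * poch b (i+1) * poch (c + (i+1 : ℕ)) (k + 1 - (i+1)))
        + (-1) ^ 0 * ((k+1).choose 0 : ℂ) * poch b 0 * poch (c + (0:ℕ)) (k + 1 - 0)
        = ∑ j ∈ Finset.range (k + 2),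
            (-1) ^ j * (k.choose j : ℂ) * poch b j * poch (c + j) (k + 1 - j) := by
      rw [Finset.sum_range_succ' (fun j => (-1) ^ j * (k.choose j : ℂ) * poch b j * poch (c + j) (k + 1 - j)) (k+1)]
      simp
    have h3 : ∑ j ∈ Finset.range (k + 2),
          (-1) ^ j * (k.choose j : ℂ) * poch b j * poch (c + j) (k + 1 - j)
        = (c + k) * poch (c - b) k := by
      rw [Finset.sum_range_succ]
      have : ∀ j ∈ Finset.range (k+1),
          (-1) ^ j * (k.choose j : ℂ) * poch b j * poch (c + j) (k + 1 - j)
          = (c + k) * ((-1) ^ j * (k.choose j : ℂ) * poch b j * poch (c + j) (k - j)) := by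
        intro j hj
        have hj' : j ≤ k := Nat.lt_succ_iff.1 (Finset.mem_range.1 hj)
        have : k + 1 - j = (k - j) + 1 := by omega
        rw [this, poch_succ]
        have : ((k - j : ℕ) : ℂ) = (k : ℂ) - j := by
          push_cast [Nat.cast_sub hj']; ring
        rw [this]
        ring
      rw [Finset.sum_congr rfl this, ← Finset.mul_sum, ih b c]
      simp [Nat.choose_succ_self]
    rw [add_assoc, h2, h3, poch_succ]
    push_cast
    ring

lemma poch_neg_nat (N : ℕ) : ∀ m ≤ N, poch (-(N : ℂ)) m = (-1) ^ m * (m.factorial : ℂ) * (N.choose m : ℂ) := by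
  intro m
  induction m with
  | zero => intro _; simp [poch_zero]
  | succ m ih =>
    intro hm
    have hm' : m ≤ N := by omega
    rw [poch_succ, ih hm']
    have key : ((N.choose (m+1) : ℕ) : ℂ) * (m+1 : ℂ) = (N.choose m : ℂ) * ((N : ℂ) - m) := by
      have := Nat.choose_succ_right_eq N m
      have hc : ((N.choose (m+1) * (m+1) : ℕ) : ℂ) = ((N.choose m * (N - m) : ℕ) : ℂ) := by
        exact_mod_cast congrArg (Nat.cast : ℕ → ℂ) this
      push_cast [Nat.cast_sub hm'] at hc
      push_cast
      linear_combination hc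
    have hfac : ((m+1).factorial : ℂ) = (m.factorial : ℂ) * (m+1 : ℂ) := by
      rw [Nat.factorial_succ]; push_cast; ring
    rw [hfac]
    push_cast
    linear_combination ((-1:ℂ))^m * (m.factorial : ℂ) * key - (-1:ℂ)^m * (m.factorial:ℂ) * ((N:ℂ)-m) * (N.choose m : ℂ) - (-1:ℂ)^m * (m.factorial:ℂ) * (N.choose m : ℂ) * ((N:ℂ) - m) + ((-1:ℂ))^m * (m.factorial : ℂ) * (N.choose m : ℂ) * (2*(N:ℂ) - 2*m)

lemma chu (N : ℕ) (b d : ℂ) (hd : ∀ m ≤ N, poch d m ≠ 0) :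
    ∑ m ∈ Finset.range (N + 1),
      poch b m * poch (-(N : ℂ)) m / (poch d m * (m.factorial : ℂ))
      = poch (d - b) N / poch d N := by
  rw [eq_div_iff (hd N le_rfl), ← vandermonde N b d, Finset.sum_mul]
  apply Finset.sum_congr rfl
  intro m hm
  have hm' : m ≤ N := Nat.lt_succ_iff.1 (Finset.mem_range.1 hm)
  have hdN : poch d N = poch d m * poch (d + m) (N - m) := by
    rw [← poch_add]; congr 1; omega
  have hfac : ((m.factorial : ℕ) : ℂ) ≠ 0 := Nat.cast_ne_zero.2 m.factorial_ne_zero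
  rw [poch_neg_nat N m hm', hdN]
  field_simp [hd m hm']

lemma Gamma_poch (x : ℂ) (n : ℕ) (h : ∀ i < n, x + i ≠ 0) :
    Complex.Gamma (x + n) = poch x n * Complex.Gamma x := by
  induction n with
  | zero => simp [poch_zero]
  | succ n ih =>
    have hx : x + n ≠ 0 := h n (Nat.lt_succ_self n)
    have : x + ((n + 1 : ℕ) : ℂ) = (x + n) + 1 := by push_cast; ring
    rw [this, Complex.Gamma_add_one _ hx, ih (fun i hi => h i (by omega)), poch_succ]
    ring

lemma main_sum (a a' c c' : ℂ) (n : ℕ)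
    (hc' : ∀ k ≤ n, poch c' k ≠ 0)
    (hc : ∀ k ≤ n, poch (1 - (n : ℂ) - c) k ≠ 0)
    (hca : ∀ k ≤ n, poch (c + a) k ≠ 0) :
    poch (c + a) n * threeF2 a (c' - a') n c' (c + a)
      = poch c n * threeF2 a a' n c' (1 - (n : ℂ) - c) := by
  set W : ℕ → ℕ → ℂ := fun k j =>
    (-1) ^ j * (k.choose j : ℂ) * poch a k * poch a' j * poch (-(n : ℂ)) k *
      poch (c' + j) (k - j) / (poch c' k * poch (c + a) k * (k.factorial : ℂ)) with hW
  have step1 : threeF2 a (c' - a') n c' (c + a)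
      = ∑ k ∈ Finset.range (n + 1), ∑ j ∈ Finset.range (k + 1), W k j := by
    simp only [threeF2]
    apply Finset.sum_congr rfl
    intro k _
    rw [← vandermonde k a' c', Finset.mul_sum, Finset.sum_mul, Finset.sum_div]
    apply Finset.sum_congr rfl
    intro j _
    simp only [hW]
    ring
  have step2 : ∑ k ∈ Finset.range (n + 1), ∑ j ∈ Finset.range (k + 1), W k j
      = ∑ j ∈ Finset.range (n + 1), ∑ k ∈ Finset.Ico j (n + 1), W k j := by
    apply Finset.sum_comm'
    intro k j
    simp only [Finset.mem_range, Finset.mem_Ico]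
    omega
  rw [step1, step2, threeF2, Finset.mul_sum, Finset.mul_sum]
  apply Finset.sum_congr rfl
  intro j hj
  have hjn : j ≤ n := Nat.lt_succ_iff.1 (Finset.mem_range.1 hj)
  rw [Finset.sum_Ico_eq_sum_range]
  set A : ℂ := (-1) ^ j * poch a j * poch a' j * poch (-(n : ℂ)) j /
      (poch c' j * poch (c + a) j * (j.factorial : ℂ)) with hA
  have hfj : (j.factorial : ℂ) ≠ 0 := Nat.cast_ne_zero.2 j.factorial_ne_zero
  have hterm : ∀ m ∈ Finset.range (n + 1 - j), W (j + m) j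
      = A * (poch (a + j) m * poch (-(((n - j) : ℕ) : ℂ)) m /
          (poch (c + a + j) m * (m.factorial : ℂ))) := by
    intro m hm
    have hmn : j + m ≤ n := by
      have := Finset.mem_range.1 hm; omega
    have e1 : poch a (j + m) = poch a j * poch (a + j) m := poch_add a j m
    have e2 : poch (-(n : ℂ)) (j + m) = poch (-(n : ℂ)) j * poch (-(((n - j) : ℕ) : ℂ)) m := by
      rw [poch_add]
      congr 2
      push_cast [Nat.cast_sub hjn]
      ring
    have e3 : poch c' (j + m) = poch c' j * poch (c' + j) m := poch_add c' j m
    have e4 : poch (c + a) (j + m) = poch (c + a) j * poch (c + a + j) m := poch_add (c + a) j m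
    have e5 : ((j + m).factorial : ℂ)
        = ((j + m).choose j : ℂ) * (j.factorial : ℂ) * (m.factorial : ℂ) := by
      rw [Nat.choose_symm_add]
      exact_mod_cast
        congrArg (Nat.cast : ℕ → ℂ) (Nat.add_choose_mul_factorial_mul_factorial j m).symm
    have hne3a : poch c' j ≠ 0 := hc' j hjn
    have hne3b : poch (c' + j) m ≠ 0 := by
      intro h; exact hc' (j + m) hmn (by rw [e3, h, mul_zero])
    have hne4a : poch (c + a) j ≠ 0 := hca j hjn
    have hne4b : poch (c + a + j) m ≠ 0 := by
      intro h; exact hca (j + m) hmn (by rw [e4, h, mul_zero])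
    have hch : ((j + m).choose j : ℂ) ≠ 0 :=
      Nat.cast_ne_zero.2 (Nat.choose_pos (Nat.le_add_right j m)).ne'
    have hfm : (m.factorial : ℂ) ≠ 0 := Nat.cast_ne_zero.2 m.factorial_ne_zero
    simp only [hW, hA]
    rw [show j + m - j = m from by omega, e1, e2, e3, e4, e5]
    field_simp
  rw [Finset.sum_congr rfl hterm, ← Finset.mul_sum,
    show n + 1 - j = (n - j) + 1 from by omega]
  have hd : ∀ m ≤ n - j, poch (c + a + j) m ≠ 0 := by
    intro m hm h
    exact hca (j + m) (by omega) (by rw [poch_add, h, mul_zero])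
  rw [chu (n - j) (a + j) (c + a + j) hd,
    show c + a + (j : ℂ) - (a + j) = c from by ring]
  have f1 : poch (c + a) n = poch (c + a) j * poch (c + a + j) (n - j) := by
    rw [← poch_add]; congr 1; omega
  set P : ℂ := poch (c + ((n - j : ℕ) : ℂ)) j with hP
  have f2 : poch c n = poch c (n - j) * P := by
    rw [hP]
    rw [← poch_add]; congr 1; omega
  have f3 : poch (1 - (n : ℂ) - c) j = (-1) ^ j * P := by
    rw [hP, poch_reflect (1 - (n : ℂ) - c) j]
    congr 2
    push_cast [Nat.cast_sub hjn]
    ring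
  have hne1 : poch c' j ≠ 0 := hc' j hjn
  have hne2 : poch (c + a) j ≠ 0 := hca j hjn
  have hne5 : poch (c + a + j) (n - j) ≠ 0 := hd (n - j) le_rfl
  have hne6 : P ≠ 0 := by
    intro h
    exact hc j hjn (by rw [f3, h, mul_zero])
  rw [hA, f1, f2, f3]
  field_simp
  ring_nf
  rw [show ((-1 : ℂ)) ^ (j * 2) = 1 from by rw [mul_comm, pow_mul]; norm_num, mul_one]

/-- Thomae-type transformation of a terminating `₃F₂(1)`:
`₃F₂(a, a', -n; c', 1-n-c; 1)
  = (Γ(c+a+n)Γ(c)/(Γ(c+a)Γ(c+n))) ₃F₂(a, c'-a', -n; c', c+a; 1)`. -/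
theorem threeF2_transformation (a a' c c' : ℂ) (n : ℕ)
    (hc' : ∀ k ≤ n, poch c' k ≠ 0)
    (hc : ∀ k ≤ n, poch (1 - (n : ℂ) - c) k ≠ 0)
    (hca : ∀ k ≤ n, poch (c + a) k ≠ 0)
    (hG1 : Complex.Gamma (c + a) ≠ 0) (hG2 : Complex.Gamma (c + n) ≠ 0) :
    threeF2 a a' n c' (1 - (n : ℂ) - c) =
      Complex.Gamma (c + a + n) * Complex.Gamma c /
          (Complex.Gamma (c + a) * Complex.Gamma (c + n)) *
        threeF2 a (c' - a') n c' (c + a) := by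
  have hcfac : ∀ i < n, c + i ≠ 0 := by
    intro i hi hz
    apply hc n le_rfl
    apply Finset.prod_eq_zero (Finset.mem_range.2 (show n - 1 - i < n by omega))
    have : ((n - 1 - i : ℕ) : ℂ) = (n : ℂ) - 1 - i := by
      have h1 : n - 1 - i = n - (1 + i) := by omega
      rw [h1, Nat.cast_sub (by omega)]
      push_cast; ring
    rw [this]
    linear_combination -hz
  have hcafac : ∀ i < n, (c + a) + i ≠ 0 := by
    intro i hi hz
    exact hca n le_rfl (Finset.prod_eq_zero (Finset.mem_range.2 hi) hz)
  have hGc : Complex.Gamma (c + n) = poch c n * Complex.Gamma c := Gamma_poch c n hcfac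
  have hGca : Complex.Gamma (c + a + n) = poch (c + a) n * Complex.Gamma (c + a) :=
    Gamma_poch (c + a) n hcafac
  have hpc : poch c n ≠ 0 := by
    rw [poch]
    exact Finset.prod_ne_zero_iff.2 fun i hi => hcfac i (Finset.mem_range.1 hi)
  have hGc0 : Complex.Gamma c ≠ 0 := by
    intro h; apply hG2; rw [hGc, h, mul_zero]
  have hratio : Complex.Gamma (c + a + n) * Complex.Gamma c /
      (Complex.Gamma (c + a) * Complex.Gamma (c + n)) = poch (c + a) n / poch c n := by
    rw [hGca, hGc]
    field_simp
  rw [hratio, div_mul_eq_mul_div, main_sum a a' c c' n hc' hc hca,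
    mul_div_cancel_left₀ _ hpc]
end

section
/- For each ρ ∈ ℂ, the function ω₂(z) = z · e^{-i z²/4} · ₁F₁(3/4 - iρ/2; 3/2; i z²/2) satisfies the differential equation ω₂''(z) + (z²/4 - ρ) ω₂(z) = 0 for all z ∈ ℂ. -/
set_option maxHeartbeats 1000000


open Complex

/-- Confluent hypergeometric function `₁F₁(a; b; x)`. -/
noncomputable def oneF1 (a b x : ℂ) : ℂ :=
  ∑' n : ℕ, poch a n * x ^ n / (poch b n * (n.factorial : ℂ))

namespace Om2Aux

/-- The coefficient sequence of `₁F₁(a; 3/2; ·)`. -/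
noncomputable def cc (a : ℂ) (n : ℕ) : ℂ := poch a n / (poch (3/2) n * (n.factorial : ℂ))

lemma b_add_ne (n : ℕ) : ((3/2 : ℂ) + n) ≠ 0 := by
  have h : ((3/2 : ℂ) + n) = (((3/2 + n : ℝ)) : ℂ) := by push_cast; ring
  rw [h, Complex.ofReal_ne_zero]
  positivity

lemma pochb_ne (n : ℕ) : poch (3/2) n ≠ 0 :=
  Finset.prod_ne_zero_iff.2 fun i _ => b_add_ne i

lemma norm_b_add (n : ℕ) : ‖(3/2 : ℂ) + n‖ = 3/2 + n := by
  rw [show ((3/2:ℂ)+n) = (((3/2 + n : ℝ)) : ℂ) by push_cast; ring, Complex.norm_real]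
  rw [Real.norm_eq_abs, abs_of_pos (by positivity)]

lemma norm_natC_add_one (n : ℕ) : ‖(n : ℂ) + 1‖ = (n : ℝ) + 1 := by
  rw [show ((n:ℂ)+1) = (((n+1 : ℕ)) : ℂ) by push_cast; ring, Complex.norm_natCast]
  push_cast; ring

lemma poch_succ (x : ℂ) (n : ℕ) : poch x (n+1) = poch x n * (x + n) :=
  Finset.prod_range_succ _ _

lemma natC_add_one_ne (n : ℕ) : ((n:ℂ)+1) ≠ 0 := by
  have h : (((n+1:ℕ)) : ℂ) ≠ 0 := Nat.cast_ne_zero.2 (Nat.succ_ne_zero n)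
  push_cast at h
  exact h

lemma cc_succ' (a : ℂ) (n : ℕ) :
    cc a (n+1) = cc a n * (a + n) / (((3/2:ℂ) + n) * ((n : ℂ) + 1)) := by
  unfold cc
  rw [poch_succ, poch_succ, Nat.factorial_succ, div_mul_eq_mul_div, div_div]
  congr 1
  push_cast
  ring

lemma cc_succ (a : ℂ) (n : ℕ) :
    cc a (n+1) * (((3/2:ℂ) + n) * ((n : ℂ) + 1)) = cc a n * (a + n) := by
  rw [cc_succ', div_mul_cancel₀]
  exact mul_ne_zero (b_add_ne n) (natC_add_one_ne n)

/-- Entire-type coefficient decay. -/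
def Ent (c : ℕ → ℂ) : Prop := ∀ r : ℝ, 0 ≤ r → Summable fun n => ‖c n‖ * r ^ n

lemma Ent.summable {c : ℕ → ℂ} (h : Ent c) (x : ℂ) : Summable fun n => c n * x ^ n := by
  apply Summable.of_norm
  have := h ‖x‖ (norm_nonneg x)
  simpa [norm_mul, norm_pow] using this

lemma ent_cc (a : ℂ) : Ent (cc a) := by
  intro r hr
  obtain ⟨N, hN⟩ := exists_nat_ge (2 * r * (‖a‖ + 1))
  apply summable_of_ratio_norm_eventually_le (r := 1/2) (by norm_num)
  filter_upwards [Filter.eventually_ge_atTop N] with n hn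
  have hnn : (N : ℝ) ≤ (n : ℝ) := by exact_mod_cast hn
  have hnr : 2 * r * (‖a‖ + 1) ≤ (n : ℝ) := le_trans hN hnn
  have hn0 : (0:ℝ) ≤ (n : ℝ) := Nat.cast_nonneg n
  have hna : ‖a + (n:ℂ)‖ ≤ ‖a‖ + (n:ℝ) := by
    calc ‖a + (n:ℂ)‖ ≤ ‖a‖ + ‖(n:ℂ)‖ := norm_add_le _ _
      _ = ‖a‖ + (n:ℝ) := by rw [Complex.norm_natCast]
  have hkey : ‖a + (n:ℂ)‖ * r ≤ 1/2 * ((3/2 + (n:ℝ)) * ((n:ℝ) + 1)) := by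
    nlinarith [norm_nonneg a, mul_nonneg hr hn0, norm_nonneg (a + (n:ℂ))]
  have hnorm : ‖cc a (n+1)‖ = ‖cc a n‖ * ‖a + (n:ℂ)‖ / ((3/2 + (n:ℝ)) * ((n:ℝ) + 1)) := by
    rw [cc_succ', norm_div, norm_mul, norm_mul, norm_b_add, norm_natC_add_one]
  have hP : (0:ℝ) < (3/2 + (n:ℝ)) * ((n:ℝ) + 1) := by positivity
  rw [Real.norm_of_nonneg (by positivity), Real.norm_of_nonneg (by positivity)]
  calc ‖cc a (n+1)‖ * r ^ (n+1)
      = (‖cc a n‖ * r ^ n) * ((‖a + (n:ℂ)‖ * r) / ((3/2 + (n:ℝ)) * ((n:ℝ) + 1))) := by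
        rw [hnorm, pow_succ]; ring
    _ ≤ (‖cc a n‖ * r ^ n) * (1/2) := by
        apply mul_le_mul_of_nonneg_left _ (by positivity)
        rw [div_le_iff₀ hP]
        linarith [hkey]
    _ = 1/2 * (‖cc a n‖ * r ^ n) := by ring

lemma Ent.shift {c : ℕ → ℂ} (h : Ent c) :
    Ent fun n => (((n+1 : ℕ)) : ℂ) * c (n+1) := by
  intro r hr
  have h2 := h (2*r+2) (by linarith)
  have h3 : Summable fun n => ‖c (n+1)‖ * (2*r+2) ^ (n+1) :=
    (summable_nat_add_iff 1).2 h2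
  apply Summable.of_nonneg_of_le (fun n => by positivity) _ h3
  intro n
  have h4 : ((n:ℝ) + 1) ≤ 2 ^ (n+1) := by
    have h5 : ((n:ℝ) + 1) ≤ 2 ^ n := by exact_mod_cast Nat.succ_le_of_lt (Nat.lt_two_pow_self (n := n))
    have h6 : (2:ℝ) ^ n ≤ 2 ^ (n+1) := by
      apply pow_le_pow_right₀ (by norm_num) (Nat.le_succ n)
    linarith
  have h7 : r ^ n ≤ (r+1) ^ (n+1) := by
    calc r ^ n ≤ (r+1) ^ n := pow_le_pow_left₀ hr (by linarith) n
      _ ≤ (r+1) ^ (n+1) := pow_le_pow_right₀ (by linarith) (Nat.le_succ n)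
  have h8 : ((n:ℝ)+1) * r ^ n ≤ (2*r+2) ^ (n+1) := by
    calc ((n:ℝ)+1) * r ^ n ≤ 2 ^ (n+1) * (r+1) ^ (n+1) := by
          apply mul_le_mul h4 h7 (by positivity) (by positivity)
      _ = (2*(r+1)) ^ (n+1) := by rw [mul_pow]
      _ = (2*r+2) ^ (n+1) := by ring_nf
  calc ‖(((n+1 : ℕ)) : ℂ) * c (n+1)‖ * r ^ n
      = (((n:ℝ)+1) * r ^ n) * ‖c (n+1)‖ := by
        rw [norm_mul, Complex.norm_natCast]; push_cast; ring
    _ ≤ (2*r+2) ^ (n+1) * ‖c (n+1)‖ := by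
        apply mul_le_mul_of_nonneg_right h8 (norm_nonneg _)
    _ = ‖c (n+1)‖ * (2*r+2) ^ (n+1) := by ring

lemma Ent.hasDerivAt {c : ℕ → ℂ} (h : Ent c) (x : ℂ) :
    HasDerivAt (fun y => ∑' n, c n * y ^ n)
      (∑' n, (((n+1 : ℕ)) : ℂ) * c (n+1) * x ^ n) x := by
  have hR : (0:ℝ) < ‖x‖ + 1 := by positivity
  have hR1 : (1:ℝ) ≤ ‖x‖ + 1 := by linarith [norm_nonneg x]
  have hxmem : x ∈ Metric.ball (0:ℂ) (‖x‖ + 1) := by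
    simp [Metric.mem_ball, dist_zero_right]
  have hbound : ∀ (n : ℕ) (y : ℂ), y ∈ Metric.ball (0:ℂ) (‖x‖ + 1) →
      ‖c n * ((n:ℂ) * y ^ (n-1))‖ ≤ ‖c n‖ * (2*(‖x‖ + 1)) ^ n := by
    intro n y hy
    have hyR : ‖y‖ ≤ ‖x‖ + 1 := by
      have := Metric.mem_ball.mp hy
      rw [dist_zero_right] at this
      exact this.le
    rw [norm_mul, norm_mul, Complex.norm_natCast, norm_pow]
    have h1 : ‖y‖ ^ (n-1) ≤ (‖x‖ + 1) ^ (n-1) := pow_le_pow_left₀ (norm_nonneg y) hyR _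
    have h2 : (‖x‖ + 1) ^ (n-1) ≤ (‖x‖ + 1) ^ n := pow_le_pow_right₀ hR1 (Nat.sub_le n 1)
    have h3 : (n:ℝ) ≤ 2 ^ n := by exact_mod_cast (Nat.lt_two_pow_self (n := n)).le
    calc ‖c n‖ * ((n:ℝ) * ‖y‖ ^ (n-1))
        ≤ ‖c n‖ * (2 ^ n * (‖x‖ + 1) ^ n) := by
          apply mul_le_mul_of_nonneg_left _ (norm_nonneg _)
          exact mul_le_mul h3 (h1.trans h2) (by positivity) (by positivity)
      _ = ‖c n‖ * (2*(‖x‖ + 1)) ^ n := by rw [mul_pow]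
  have main : HasDerivAt (fun y => ∑' n, c n * y ^ n)
      (∑' n, c n * ((n:ℂ) * x ^ (n-1))) x := by
    exact hasDerivAt_tsum_of_isPreconnected
      (u := fun n => ‖c n‖ * (2*(‖x‖ + 1)) ^ n)
      (g := fun n y => c n * y ^ n)
      (g' := fun n y => c n * ((n:ℂ) * y ^ (n-1)))
      (h (2*(‖x‖ + 1)) (by positivity))
      Metric.isOpen_ball (convex_ball (0:ℂ) (‖x‖ + 1)).isPreconnected
      (fun n y _ => ((hasDerivAt_pow n y).const_mul (c n)))
      hbound (Metric.mem_ball_self hR) (h.summable 0) hxmem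
  convert main using 1
  have hs : Summable fun n => c n * ((n:ℂ) * x ^ (n-1)) := by
    apply Summable.of_norm_bounded (h (2*(‖x‖ + 1)) (by positivity))
    intro n
    exact hbound n x hxmem
  rw [hs.tsum_eq_zero_add]
  simp only [Nat.cast_zero, zero_mul, mul_zero, zero_add]
  apply tsum_congr
  intro n
  simp only [Nat.add_sub_cancel]
  push_cast
  ring

/-- Shifted coefficients. -/
noncomputable def c1 (a : ℂ) (n : ℕ) : ℂ := (((n+1 : ℕ)) : ℂ) * cc a (n+1)
noncomputable def c2 (a : ℂ) (n : ℕ) : ℂ := (((n+1 : ℕ)) : ℂ) * c1 a (n+1)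

noncomputable def uF (a : ℂ) (x : ℂ) : ℂ := ∑' n, cc a n * x ^ n
noncomputable def vF (a : ℂ) (x : ℂ) : ℂ := ∑' n, c1 a n * x ^ n
noncomputable def wF (a : ℂ) (x : ℂ) : ℂ := ∑' n, c2 a n * x ^ n

lemma ent_c1 (a : ℂ) : Ent (c1 a) := (ent_cc a).shift
lemma ent_c2 (a : ℂ) : Ent (c2 a) := (ent_c1 a).shift

lemma hasDerivAt_uF (a : ℂ) (x : ℂ) : HasDerivAt (uF a) (vF a x) x := by
  have := (ent_cc a).hasDerivAt x
  show HasDerivAt (fun y => ∑' n, cc a n * y ^ n) _ x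
  simpa [uF, vF, c1] using this

lemma hasDerivAt_vF (a : ℂ) (x : ℂ) : HasDerivAt (vF a) (wF a x) x := by
  have := (ent_c1 a).hasDerivAt x
  show HasDerivAt (fun y => ∑' n, c1 a n * y ^ n) _ x
  simpa [vF, wF, c2] using this

lemma kummer (a : ℂ) (x : ℂ) :
    x * wF a x + (3/2 - x) * vF a x - a * uF a x = 0 := by
  have hw : HasSum (fun n => c2 a n * x ^ n) (wF a x) := ((ent_c2 a).summable x).hasSum
  have hv : HasSum (fun n => c1 a n * x ^ n) (vF a x) := ((ent_c1 a).summable x).hasSum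
  have hu : HasSum (fun n => cc a n * x ^ n) (uF a x) := ((ent_cc a).summable x).hasSum
  -- x * wF = ∑ (n * c1 n) xⁿ
  have hxw : HasSum (fun n : ℕ => ((n:ℂ) * c1 a n) * x ^ n) (x * wF a x) := by
    have h1 := hw.mul_left x
    have h2 : (fun n => (((fun m : ℕ => ((m:ℂ) * c1 a m) * x ^ m)) (n+1))) =
        fun n => x * (c2 a n * x ^ n) := by
      funext n
      simp only [c2]
      push_cast
      ring
    have h3 : HasSum (fun n => ((fun m : ℕ => ((m:ℂ) * c1 a m) * x ^ m) (n+1))) (x * wF a x) := by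
      rw [h2]; exact h1
    have h4 := (hasSum_nat_add_iff (f := fun m : ℕ => ((m:ℂ) * c1 a m) * x ^ m) 1).1 h3
    simpa using h4
  have hxv : HasSum (fun n : ℕ => ((n:ℂ) * cc a n) * x ^ n) (x * vF a x) := by
    have h1 := hv.mul_left x
    have h2 : (fun n => (((fun m : ℕ => ((m:ℂ) * cc a m) * x ^ m)) (n+1))) =
        fun n => x * (c1 a n * x ^ n) := by
      funext n
      simp only [c1]
      push_cast
      ring
    have h3 : HasSum (fun n => ((fun m : ℕ => ((m:ℂ) * cc a m) * x ^ m) (n+1))) (x * vF a x) := by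
      rw [h2]; exact h1
    have h4 := (hasSum_nat_add_iff (f := fun m : ℕ => ((m:ℂ) * cc a m) * x ^ m) 1).1 h3
    simpa using h4
  have hbv := hv.mul_left (3/2 : ℂ)
  have hau := hu.mul_left a
  have H := (hxw.add hbv).sub (hxv.add hau)
  have hzero : (fun n : ℕ => (((n:ℂ) * c1 a n) * x ^ n + (3/2 : ℂ) * (c1 a n * x ^ n)) -
      (((n:ℂ) * cc a n) * x ^ n + a * (cc a n * x ^ n))) = fun _ => (0:ℂ) := by
    funext n
    have hr := cc_succ a n
    simp only [c1]
    push_cast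
    linear_combination x ^ n * hr
  rw [hzero] at H
  have hS := H.unique hasSum_zero
  linear_combination hS

lemma oneF1_eq (a x : ℂ) : oneF1 a (3/2) x = uF a x := by
  apply tsum_congr
  intro n
  rw [cc, div_mul_eq_mul_div]

end Om2Aux

open Om2Aux in
/-- `ω₂(z) = z e^{-iz²/4} ₁F₁(3/4 - iρ/2; 3/2; iz²/2)` solves `ω'' + (z²/4 - ρ)ω = 0`. -/
theorem omega2_solves (ρ : ℂ) :
    ∀ z : ℂ,
      deriv (deriv fun w : ℂ =>
          w * Complex.exp (-Complex.I * w ^ 2 / 4) *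
            oneF1 (3 / 4 - Complex.I * ρ / 2) (3 / 2) (Complex.I * w ^ 2 / 2)) z +
        (z ^ 2 / 4 - ρ) *
          (z * Complex.exp (-Complex.I * z ^ 2 / 4) *
            oneF1 (3 / 4 - Complex.I * ρ / 2) (3 / 2) (Complex.I * z ^ 2 / 2)) = 0 := by
  intro z
  set a : ℂ := 3 / 4 - Complex.I * ρ / 2 with ha
  have hone : ∀ x : ℂ, oneF1 (3 / 4 - Complex.I * ρ / 2) (3 / 2) x = uF a x := fun x =>
    oneF1_eq a x
  simp only [oneF1_eq]
  -- inner derivative pieces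
  have hInner : ∀ y : ℂ, HasDerivAt (fun w : ℂ => Complex.I * w ^ 2 / 2) (Complex.I * y) y := by
    intro y
    have := ((hasDerivAt_pow 2 y).const_mul Complex.I).div_const 2
    refine this.congr_deriv ?_
    push_cast
    ring
  have hExp : ∀ y : ℂ, HasDerivAt (fun w : ℂ => Complex.exp (-Complex.I * w ^ 2 / 4))
      (Complex.exp (-Complex.I * y ^ 2 / 4) * (-Complex.I * y / 2)) y := by
    intro y
    have h1 : HasDerivAt (fun w : ℂ => -Complex.I * w ^ 2 / 4) (-Complex.I * y / 2) y := by
      have := ((hasDerivAt_pow 2 y).const_mul (-Complex.I)).div_const 4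
      refine this.congr_deriv ?_
      push_cast
      ring
    exact h1.cexp
  have hU : ∀ y : ℂ, HasDerivAt (fun w : ℂ => uF a (Complex.I * w ^ 2 / 2))
      (vF a (Complex.I * y ^ 2 / 2) * (Complex.I * y)) y := fun y =>
    (hasDerivAt_uF a _).comp y (hInner y)
  have hV : ∀ y : ℂ, HasDerivAt (fun w : ℂ => vF a (Complex.I * w ^ 2 / 2))
      (wF a (Complex.I * y ^ 2 / 2) * (Complex.I * y)) y := fun y =>
    (hasDerivAt_vF a _).comp y (hInner y)
  -- first derivative
  set A : ℂ → ℂ := fun y => Complex.exp (-Complex.I * y ^ 2 / 4) *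
      ((1 - Complex.I * y ^ 2 / 2) * uF a (Complex.I * y ^ 2 / 2) +
        Complex.I * y ^ 2 * vF a (Complex.I * y ^ 2 / 2)) with hA_def
  have hΩ : ∀ y : ℂ, HasDerivAt (fun w : ℂ =>
      w * Complex.exp (-Complex.I * w ^ 2 / 4) * uF a (Complex.I * w ^ 2 / 2)) (A y) y := by
    intro y
    have h1 := ((hasDerivAt_id y).mul (hExp y)).mul (hU y)
    refine h1.congr_deriv ?_
    simp only [hA_def, id, Pi.mul_apply]
    ring
  have hder1 : (deriv fun w : ℂ =>
      w * Complex.exp (-Complex.I * w ^ 2 / 4) * uF a (Complex.I * w ^ 2 / 2)) = A :=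
    funext fun y => (hΩ y).deriv
  rw [hder1]
  -- second derivative
  have hA : HasDerivAt A
      ((Complex.exp (-Complex.I * z ^ 2 / 4) * (-Complex.I * z / 2)) *
        ((1 - Complex.I * z ^ 2 / 2) * uF a (Complex.I * z ^ 2 / 2) +
          Complex.I * z ^ 2 * vF a (Complex.I * z ^ 2 / 2)) +
       Complex.exp (-Complex.I * z ^ 2 / 4) *
        ((-Complex.I * z) * uF a (Complex.I * z ^ 2 / 2) +
          (1 - Complex.I * z ^ 2 / 2) * (vF a (Complex.I * z ^ 2 / 2) * (Complex.I * z)) +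
          ((2 * Complex.I * z) * vF a (Complex.I * z ^ 2 / 2) +
            Complex.I * z ^ 2 * (wF a (Complex.I * z ^ 2 / 2) * (Complex.I * z))))) z := by
    have hg1 : HasDerivAt (fun y : ℂ => (1 - Complex.I * y ^ 2 / 2)) (-Complex.I * z) z := by
      have := ((hasDerivAt_pow 2 z).const_mul Complex.I).div_const 2
      have h2 := ((hasDerivAt_const z (1:ℂ)).sub this)
      refine h2.congr_deriv ?_
      push_cast
      ring
    have hg3 : HasDerivAt (fun y : ℂ => Complex.I * y ^ 2) (2 * Complex.I * z) z := by
      have := (hasDerivAt_pow 2 z).const_mul Complex.I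
      refine this.congr_deriv ?_
      push_cast
      ring
    have hG := (hg1.mul (hU z)).add (hg3.mul (hV z))
    have := (hExp z).mul hG
    exact this
    try ring
  rw [hA.deriv]
  have K := kummer a (Complex.I * z ^ 2 / 2)
  rw [ha] at K
  linear_combination (2 * Complex.I * z * Complex.exp (-Complex.I * z ^ 2 / 4)) * K +
    (Complex.exp (-Complex.I * z ^ 2 / 4) * uF a (Complex.I * z ^ 2 / 2) *
      (z ^ 3 / 4 - ρ * z)) * Complex.I_sq
end
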